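/- Let K be a real-valued field and M a module over its ring of integers K°. Then: (i) the adic seminorm ‖·‖_adic is the maximal K°-module seminorm on M bounded by 1, i.e., it is a K°-module seminorm with ‖x‖_adic ≤ 1 for all x, and every K°-module seminorm ‖·‖' on M with ‖x‖' ≤ 1 for all x satisfies ‖x‖' ≤ ‖x‖_adic; (ii) for x ∈ M one has ‖x‖_adic = 0 if and only if x is divisible. -/

import Mathlib

open scoped NNReal

/-- A (nonarchimedean) seminorm on an additive group. -/
def IsGroupSeminorm {M : Type*} [AddCommGroup M] (f : M → ℝ≥0) : Prop :=
  f 0 = 0 ∧ ∀ x y : M, f (x - y) ≤ max (f x) (f y)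

/-- A seminorm on a module over a seminormed ring. -/
def IsModuleSeminorm {A M : Type*} [CommRing A] [AddCommGroup M] [Module A M]
    (fA : A → ℝ≥0) (fM : M → ℝ≥0) : Prop :=
  IsGroupSeminorm fM ∧ ∀ (a : A) (m : M), fM (a • m) ≤ fA a * fM m

/-- The adic seminorm on a `K°`-module `M`: `‖x‖ = inf {|a| : a ∈ K°, x ∈ aM}`. -/
noncomputable def adicSeminorm {K : Type*} [Field K] (vK : Valuation K ℝ≥0)
    (M : Type*) [AddCommGroup M] [Module ↥vK.integer M] (x : M) : ℝ≥0 :=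
  sInf { r | ∃ a : ↥vK.integer, (∃ y : M, x = a • y) ∧ r = vK ↑a }

section Aux
variable {K : Type*} [Field K] (vK : Valuation K ℝ≥0)
variable (M : Type*) [AddCommGroup M] [Module ↥vK.integer M]

lemma adic_le {x : M} (a : ↥vK.integer) (y : M) (h : x = a • y) :
    adicSeminorm vK M x ≤ vK ↑a :=
  csInf_le (OrderBot.bddBelow _) ⟨a, ⟨y, h⟩, rfl⟩

lemma adic_nonempty (x : M) :
    { r | ∃ a : ↥vK.integer, (∃ y : M, x = a • y) ∧ r = vK ↑a }.Nonempty :=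
  ⟨vK 1, 1, ⟨x, (one_smul _ x).symm⟩, by simp⟩

lemma adic_zero : adicSeminorm vK M 0 = 0 :=
  le_antisymm (by simpa using adic_le vK M (0 : ↥vK.integer) (0 : M) (by simp)) bot_le

lemma div_of_le {a b : ↥vK.integer} (h : vK ↑a ≤ vK ↑b) : ∃ d : ↥vK.integer, a = b * d := by
  by_cases hb : (b : K) = 0
  · have ha0 : vK (a : K) = 0 := le_antisymm (by simpa [hb] using h) bot_le
    refine ⟨0, Subtype.ext ?_⟩
    simpa using (Valuation.zero_iff vK).mp ha0
  · have hbpos : (0 : ℝ≥0) < vK (b : K) := pos_iff_ne_zero.mpr (by simpa using hb)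
    have hd : vK ((a : K) / b) ≤ 1 := by
      rw [vK.map_div]
      exact div_le_one_of_le₀ h zero_le
    refine ⟨⟨(a : K) / b, hd⟩, Subtype.ext ?_⟩
    show (a : K) = b * ((a : K) / b)
    field_simp

end Aux

/-- For a `K°`-module `M`: (i) the adic seminorm is the maximal `K°`-module seminorm on `M`
bounded by `1`; (ii) `‖x‖_adic = 0` iff `x` is divisible (infinitely `π`-divisible, where
`π ∈ K°°` is nonzero if the absolute value of `K` is nontrivial and `π = 0` if it is trivial). -/
theorem adicSeminorm_maximal_and_kernel
    {K : Type*} [Field K] (vK : Valuation K ℝ≥0)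
    (M : Type*) [AddCommGroup M] [Module ↥vK.integer M]
    (π : ↥vK.integer) (hπlt : vK ↑π < 1)
    (hπtriv : π = 0 ↔ ∀ y : K, y ≠ 0 → vK y = 1) :
    -- (i) maximal module seminorm bounded by 1
    (IsModuleSeminorm (fun a : ↥vK.integer => vK ↑a) (adicSeminorm vK M) ∧
      (∀ x : M, adicSeminorm vK M x ≤ 1) ∧
      (∀ w : M → ℝ≥0, IsModuleSeminorm (fun a : ↥vK.integer => vK ↑a) w →
        (∀ x : M, w x ≤ 1) → ∀ x : M, w x ≤ adicSeminorm vK M x)) ∧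
    -- (ii) kernel = divisible elements
    (∀ x : M, adicSeminorm vK M x = 0 ↔ ∀ n : ℕ, ∃ y : M, x = (π ^ n) • y) := by
  have hsub : ∀ x y : M, adicSeminorm vK M (x - y) ≤
      max (adicSeminorm vK M x) (adicSeminorm vK M y) := by
    intro x y
    by_contra hcon
    push_neg at hcon
    obtain ⟨r, ⟨a, ⟨x', hx'⟩, rfl⟩, hr⟩ :=
      exists_lt_of_csInf_lt (adic_nonempty vK M x) (lt_of_le_of_lt (le_max_left _ _) hcon)
    obtain ⟨s, ⟨b, ⟨y', hy'⟩, rfl⟩, hs⟩ :=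
      exists_lt_of_csInf_lt (adic_nonempty vK M y) (lt_of_le_of_lt (le_max_right _ _) hcon)
    -- wlog via cases on which valuation is larger
    rcases le_total (vK (a : K)) (vK (b : K)) with hab | hab
    · obtain ⟨d, hd⟩ := div_of_le vK hab
      have : x - y = b • (d • x' - y') := by
        rw [smul_sub, ← mul_smul, ← hd, ← hx', ← hy']
      exact absurd (adic_le vK M b _ this) (not_le.mpr hs)
    · obtain ⟨d, hd⟩ := div_of_le vK hab
      have : x - y = a • (x' - d • y') := by
        rw [smul_sub, ← mul_smul, ← hd, ← hx', ← hy']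
      exact absurd (adic_le vK M a _ this) (not_le.mpr hr)
  have hsmul : ∀ (a : ↥vK.integer) (m : M),
      adicSeminorm vK M (a • m) ≤ vK ↑a * adicSeminorm vK M m := by
    intro a m
    by_cases ha : vK (a : K) = 0
    · have : (a : K) = 0 := (Valuation.zero_iff vK).mp ha
      have ha0 : a = 0 := Subtype.ext this
      rw [ha0, zero_smul, adic_zero]
      exact zero_le
    · by_contra hcon
      push_neg at hcon
      have hlt : adicSeminorm vK M m < adicSeminorm vK M (a • m) / vK (a : K) :=
        (lt_div_iff₀ (pos_iff_ne_zero.mpr ha)).mpr (by rwa [mul_comm] at hcon)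
      obtain ⟨s, ⟨b, ⟨y, hy⟩, rfl⟩, hs⟩ :=
        exists_lt_of_csInf_lt (adic_nonempty vK M m) hlt
      have hmem : a • m = (a * b) • y := by rw [hy, mul_smul]
      have h1 : adicSeminorm vK M (a • m) ≤ vK ((a : K) * b) := adic_le vK M (a * b) y hmem
      rw [vK.map_mul] at h1
      have h2 : vK (a : K) * vK (b : K) < adicSeminorm vK M (a • m) := by
        have := (lt_div_iff₀ (pos_iff_ne_zero.mpr ha)).mp hs
        rwa [mul_comm] at this
      exact absurd h1 (not_le.mpr h2)
  have hle1 : ∀ x : M, adicSeminorm vK M x ≤ 1 := by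
    intro x
    simpa using adic_le vK M 1 x (one_smul _ x).symm
  refine ⟨⟨⟨⟨adic_zero vK M, hsub⟩, hsmul⟩, hle1, ?_⟩, ?_⟩
  · -- maximality
    intro w hw hw1 x
    refine le_csInf (adic_nonempty vK M x) ?_
    rintro r ⟨a, ⟨y, hy⟩, rfl⟩
    calc w x = w (a • y) := by rw [hy]
    _ ≤ vK (a : K) * w y := hw.2 a y
    _ ≤ vK (a : K) * 1 := mul_le_mul_right (hw1 y) _
    _ = vK (a : K) := mul_one _
  · -- kernel
    intro x
    constructor
    · intro h0 n
      by_cases hπ : π = 0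
      · -- trivial valuation: show x = 0
        have htriv := hπtriv.mp hπ
        have hx0 : x = 0 := by
          have h01 : adicSeminorm vK M x < 1 := by rw [h0]; norm_num
          obtain ⟨r, ⟨a, ⟨y, hy⟩, rfl⟩, hr⟩ :=
            exists_lt_of_csInf_lt (adic_nonempty vK M x) h01
          have ha : (a : K) = 0 := by
            by_contra hne
            exact absurd (htriv _ hne) (ne_of_lt hr)
          have ha' : a = 0 := Subtype.ext (by simpa using ha)
          rw [hy, ha', zero_smul]
        exact ⟨0, by rw [hx0, smul_zero]⟩
      · have hπK : (π : K) ≠ 0 := fun h => hπ (Subtype.ext h)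
        have hπpos : (0 : ℝ≥0) < vK (π : K) := pos_iff_ne_zero.mpr (by simpa using hπK)
        have hpow : (0 : ℝ≥0) < (vK (π : K)) ^ n := pow_pos hπpos n
        rw [← h0] at hpow
        obtain ⟨r, ⟨a, ⟨y, hy⟩, rfl⟩, hr⟩ :=
          exists_lt_of_csInf_lt (adic_nonempty vK M x) hpow
        have hval : vK (a : K) ≤ vK ((π ^ n : ↥vK.integer) : K) := by
          push_cast
          rw [vK.map_pow]
          exact hr.le
        obtain ⟨d, hd⟩ := div_of_le vK hval
        exact ⟨d • y, by rw [hy, hd, mul_smul]⟩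
    · intro hdiv
      by_contra hne
      have hpos : (0 : ℝ≥0) < adicSeminorm vK M x := pos_iff_ne_zero.mpr hne
      obtain ⟨n, hn⟩ := exists_pow_lt_of_lt_one hpos hπlt
      obtain ⟨y, hy⟩ := hdiv n
      have : adicSeminorm vK M x ≤ vK ((π ^ n : ↥vK.integer) : K) :=
        adic_le vK M (π ^ n) y hy
      rw [show ((π ^ n : ↥vK.integer) : K) = (π : K) ^ n by push_cast; ring, vK.map_pow] at this
      exact absurd this (not_le.mpr hn)
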